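/- For n ≥ 3, the single-dipped domain with respect to the ordering o1, ..., on satisfies the top-two condition. -/

import Mathlib

def top {α : Type*} (P : α → α → Prop) (O' : Set α) (a : α) : Prop :=
  a ∈ O' ∧ ∀ c ∈ O', c ≠ a → P a c

def topTwo {α : Type*} (D : Set (α → α → Prop)) : Prop :=
  ∀ O' : Set α, O'.Nonempty → ∀ a b : α, a ∈ O' → b ∈ O' → a ≠ b →
    (∃ P ∈ D, top P O' a) → (∃ P ∈ D, top P O' b) →
      ∃ P0 ∈ D, top P0 O' a ∧ top P0 (O' \ {a}) b

def bottom {α : Type*} (P : α → α → Prop) (O' : Set α) (d : α) : Prop :=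
  d ∈ O' ∧ ∀ c ∈ O', c ≠ d → P c d

/-- Single-dipped w.r.t. the ordering o1 → ... → on (objects are `Fin n`, o_k = k-1):
if d is the least-preferred object, the preference decreases up to d and increases after d. -/
def singleDipped {n : ℕ} (P : Fin n → Fin n → Prop) : Prop :=
  IsStrictTotalOrder (Fin n) P ∧
    ∀ d : Fin n, bottom P Set.univ d →
      ∀ k : ℕ, ∀ hk : k + 1 < n,
        (k + 1 ≤ (d : ℕ) → P ⟨k, by omega⟩ ⟨k + 1, hk⟩) ∧
        ((d : ℕ) ≤ k → P ⟨k + 1, hk⟩ ⟨k, by omega⟩)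

/-- The single-dipped domain. -/
def SDDomain (n : ℕ) : Set (Fin n → Fin n → Prop) := {P | singleDipped P}



lemma exists_bot {α : Type*} (P : α → α → Prop)
    (htri : ∀ x y : α, x ≠ y → P x y ∨ P y x)
    (htrans : ∀ x y z : α, P x y → P y z → P x z) :
    ∀ s : Finset α, s.Nonempty → ∃ d ∈ s, ∀ c ∈ s, c ≠ d → P c d := by
  intro s
  induction s using Finset.cons_induction with
  | empty => intro h; exact absurd h (by simp)
  | cons x s hx ih =>
    intro _
    by_cases hs : s.Nonempty
    · obtain ⟨d, hd, hmin⟩ := ih hs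
      have hxd : x ≠ d := fun h => hx (h ▸ hd)
      rcases htri x d hxd with h | h
      · refine ⟨d, Finset.mem_cons_of_mem hd, ?_⟩
        intro c hc hcd
        rcases Finset.mem_cons.mp hc with rfl | hc'
        · exact h
        · exact hmin c hc' hcd
      · refine ⟨x, Finset.mem_cons_self x s, ?_⟩
        intro c hc hcx
        rcases Finset.mem_cons.mp hc with rfl | hc'
        · exact absurd rfl hcx
        · by_cases hcd : c = d
          · exact hcd ▸ h
          · exact htrans c d x (hmin c hc' hcd) h
    · have hse : s = ∅ := Finset.not_nonempty_iff_eq_empty.mp hs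
      subst hse
      refine ⟨x, Finset.mem_cons_self x ∅, ?_⟩
      intro c hc hcx
      rcases Finset.mem_cons.mp hc with rfl | hc'
      · exact absurd rfl hcx
      · exact absurd hc' (by simp)

lemma uchain_down (u : ℕ → ℤ) (m : ℕ) (h : ∀ k, k + 1 ≤ m → u (k+1) < u k) :
    ∀ j, j ≤ m → ∀ i, i < j → u j < u i := by
  intro j
  induction j with
  | zero => intro _ i hi; omega
  | succ j ih =>
    intro hj i hi
    have h1 : u (j+1) < u j := h j hj
    rcases Nat.lt_or_ge i j with h2 | h2
    · exact h1.trans (ih (by omega) i h2)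
    · have hij : i = j := by omega
      subst hij; exact h1

lemma uchain_up (u : ℕ → ℤ) (m b : ℕ) (h : ∀ k, m ≤ k → k + 1 ≤ b → u k < u (k+1)) :
    ∀ j, j ≤ b → ∀ i, m ≤ i → i < j → u i < u j := by
  intro j
  induction j with
  | zero => intro _ i _ hi; omega
  | succ j ih =>
    intro hj i him hi
    have h1 : u j < u (j+1) := h j (by omega) hj
    rcases Nat.lt_or_ge i j with h2 | h2
    · exact (ih (by omega) i him h2).trans h1
    · have hij : i = j := by omega
      subst hij; exact h1

lemma sd_PU {n : ℕ} (u : ℕ → ℤ) (d₀ : ℕ) (hd₀ : d₀ < n)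
    (hinj : ∀ i j : ℕ, i < n → j < n → i ≠ j → u i ≠ u j)
    (hdown : ∀ k, k + 1 ≤ d₀ → u (k+1) < u k)
    (hup : ∀ k, d₀ ≤ k → k + 1 < n → u k < u (k+1)) :
    singleDipped (fun x y : Fin n => u (y:ℕ) < u (x:ℕ)) := by
  have hmin : ∀ m : ℕ, m < n → m ≠ d₀ → u d₀ < u m := by
    intro m hm hmne
    rcases Nat.lt_or_ge m d₀ with h | h
    · exact uchain_down u d₀ hdown d₀ le_rfl m h
    · exact uchain_up u d₀ (n-1) (fun k hk hk' => hup k hk (by omega)) m (by omega) d₀ le_rfl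
        (by omega)
  constructor
  · refine { trichotomous := ?_, irrefl := ?_, trans := ?_ }
    · intro x y
      rcases lt_trichotomy (u (x:ℕ)) (u (y:ℕ)) with h | h | h
      · exact fun _ h' => absurd h h'
      · refine fun _ _ => ?_
        by_contra hxy
        exact hinj x y x.isLt y.isLt (fun hv => hxy (Fin.ext hv)) h
      · exact fun h' _ => absurd h h'
    · intro x h; exact lt_irrefl _ h
    · intro x y z h1 h2; exact h2.trans h1
  · intro d hd k hk
    have hdd : (d:ℕ) = d₀ := by
      by_contra hne
      have h1 := hmin (d:ℕ) d.isLt hne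
      have h2 := hd.2 ⟨d₀, hd₀⟩ (Set.mem_univ _) (fun he => hne (by rw [← he]))
      exact absurd h1 (not_lt.mpr h2.le)
    constructor
    · intro h; exact hdown k (by omega)
    · intro h; exact hup k (by omega) hk

lemma top_min_or_max {n : ℕ} (hn : 3 ≤ n) {P : Fin n → Fin n → Prop} (hP : singleDipped P)
    {O' : Set (Fin n)} {a : Fin n} (htop : top P O' a) :
    (∀ c ∈ O', a ≤ c) ∨ (∀ c ∈ O', c ≤ a) := by
  obtain ⟨hsto, hsd⟩ := hP
  have htri := hsto.trichotomous
  have htrans : ∀ x y z : Fin n, P x y → P y z → P x z :=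
    fun x y z => hsto.toIsStrictOrder.toIsTrans.trans x y z
  have hirr : ∀ x, ¬ P x x := by haveI := hsto; exact fun x => irrefl_of P x
  have htri' : ∀ x y : Fin n, x ≠ y → P x y ∨ P y x := by
    intro x y hxy
    by_contra hc; push_neg at hc; exact hxy (htri x y hc.1 hc.2)
  have hne : (Finset.univ : Finset (Fin n)).Nonempty := ⟨⟨0, by omega⟩, Finset.mem_univ _⟩
  obtain ⟨d, _, hdmin⟩ := exists_bot P htri' htrans Finset.univ hne
  have hbot : bottom P Set.univ d := ⟨Set.mem_univ _, fun c _ hc => hdmin c (Finset.mem_univ _) hc⟩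
  have hd := hsd d hbot
  have chainD : ∀ j, ∀ hj : j < n, j ≤ (d:ℕ) → ∀ i, ∀ hij : i < j, P ⟨i, by omega⟩ ⟨j, hj⟩ := by
    intro j
    induction j with
    | zero => intro _ _ i hi; omega
    | succ j ih =>
      intro hj hjd i hij
      have hstep : P ⟨j, by omega⟩ ⟨j+1, hj⟩ := (hd j hj).1 hjd
      rcases Nat.lt_or_ge i j with h2 | h2
      · exact htrans _ _ _ (ih (by omega) (by omega) i h2) hstep
      · have hij' : i = j := by omega
        subst hij'; exact hstep
  have chainU : ∀ j, ∀ hj : j < n, (d:ℕ) ≤ j → ∀ i, (d:ℕ) ≤ i → ∀ hij : i < j,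
      P ⟨j, hj⟩ ⟨i, by omega⟩ := by
    intro j
    induction j with
    | zero => intro _ _ i _ hi; omega
    | succ j ih =>
      intro hj hjd i hid hij
      have hstep : P ⟨j+1, hj⟩ ⟨j, by omega⟩ := (hd j hj).2 (by omega)
      rcases Nat.lt_or_ge i j with h2 | h2
      · exact htrans _ _ _ hstep (ih (by omega) (by omega) i hid h2)
      · have hij' : i = j := by omega
        subst hij'; exact hstep
  by_contra hcon
  push_neg at hcon
  obtain ⟨⟨c2, hc2, hc2'⟩, ⟨c1, hc1, hc1'⟩⟩ := hcon
  have h2v : (c2:ℕ) < (a:ℕ) := Fin.lt_def.mp hc2'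
  have h1v : (a:ℕ) < (c1:ℕ) := Fin.lt_def.mp hc1'
  rcases le_or_gt (a:ℕ) (d:ℕ) with had | had
  · have hch := chainD (a:ℕ) a.isLt had (c2:ℕ) h2v
    have hPc2a : P c2 a := by simpa using hch
    have hPac2 : P a c2 := htop.2 c2 hc2 (by
      intro h; rw [h] at h2v; exact absurd h2v (lt_irrefl _))
    exact hirr a (htrans _ _ _ hPac2 hPc2a)
  · have hch := chainU (c1:ℕ) c1.isLt (by omega) (a:ℕ) (by omega) h1v
    have hPc1a : P c1 a := by simpa using hch
    have hPac1 : P a c1 := htop.2 c1 hc1 (by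
      intro h; rw [h] at h1v; exact absurd h1v (lt_irrefl _))
    exact hirr a (htrans _ _ _ hPac1 hPc1a)

set_option maxHeartbeats 1000000 in
lemma caseA {n : ℕ} (hn : 3 ≤ n) {O' : Set (Fin n)} {a b : Fin n}
    (haO : a ∈ O') (hbO : b ∈ O') (hab : a ≠ b)
    (hamin : ∀ c ∈ O', a ≤ c) (hbmax : ∀ c ∈ O', c ≤ b) :
    ∃ P0 ∈ SDDomain n, top P0 O' a ∧ top P0 (O' \ {a}) b := by
  have hN0 : (0:ℤ) < (n:ℤ) := by exact_mod_cast (by omega : 0 < n)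
  set p := (a:ℕ) with hp
  set q := (b:ℕ) with hq
  have hpq : p < q := by
    have h1 := Fin.le_def.mp (hamin b hbO)
    have h2 : (a:ℕ) ≠ (b:ℕ) := fun h => hab (Fin.ext h)
    omega
  have hqn : q < n := b.isLt
  set u : ℕ → ℤ := fun k => if k < q then -(2*(n:ℤ)*k) else -(2*(n:ℤ)*p) - (n:ℤ) + ((k:ℤ) - q) with hu
  have huval1 : ∀ m : ℕ, m < q → u m = -(2*(n:ℤ)*m) := by
    intro m hm; simp [hu, hm]
  have huval2 : ∀ m : ℕ, q ≤ m → u m = -(2*(n:ℤ)*p) - (n:ℤ) + ((m:ℤ) - q) := by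
    intro m hm; simp [hu, Nat.not_lt.mpr hm]
  have hupv : u p = -(2*(n:ℤ)*p) := huval1 p hpq
  have huqv : u q = -(2*(n:ℤ)*p) - (n:ℤ) := by
    rw [huval2 q le_rfl]; ring
  set d₀ : ℕ := if q = p + 1 then q else q - 1 with hd₀def
  have hd₀q : d₀ ≤ q := by rw [hd₀def]; split <;> omega
  have hd₀lt : d₀ < n := by omega
  have hinj : ∀ i j : ℕ, i < n → j < n → i ≠ j → u i ≠ u j := by
    intro i j hi hj hij heq
    rcases Nat.lt_or_ge i q with hiq | hiq <;> rcases Nat.lt_or_ge j q with hjq | hjq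
    · rw [huval1 i hiq, huval1 j hjq] at heq
      have : (i:ℤ) = (j:ℤ) := by
        have h2 : (2*(n:ℤ)) * (i:ℤ) = (2*(n:ℤ)) * (j:ℤ) := by linarith
        exact mul_left_cancel₀ (by linarith) h2
      exact hij (by exact_mod_cast this)
    · rw [huval1 i hiq, huval2 j hjq] at heq
      have ht1 : (0:ℤ) ≤ (j:ℤ) - q := by
        have : (q:ℤ) ≤ (j:ℤ) := by exact_mod_cast hjq
        linarith
      have ht2 : (j:ℤ) - q < (n:ℤ) := by
        have : (j:ℤ) < (n:ℤ) := by exact_mod_cast hj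
        have hq0 : (0:ℤ) ≤ (q:ℤ) := by positivity
        linarith
      rcases le_or_gt (i:ℤ) (p:ℤ) with h | h
      · nlinarith [mul_nonneg (by linarith : (0:ℤ) ≤ 2*(n:ℤ)) (by linarith : (0:ℤ) ≤ (p:ℤ) - i)]
      · nlinarith [mul_le_mul_of_nonneg_left (by linarith : (1:ℤ) ≤ (i:ℤ) - p)
          (by linarith : (0:ℤ) ≤ 2*(n:ℤ))]
    · rw [huval2 i hiq, huval1 j hjq] at heq
      have ht1 : (0:ℤ) ≤ (i:ℤ) - q := by
        have : (q:ℤ) ≤ (i:ℤ) := by exact_mod_cast hiq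
        linarith
      have ht2 : (i:ℤ) - q < (n:ℤ) := by
        have : (i:ℤ) < (n:ℤ) := by exact_mod_cast hi
        have hq0 : (0:ℤ) ≤ (q:ℤ) := by positivity
        linarith
      rcases le_or_gt (j:ℤ) (p:ℤ) with h | h
      · nlinarith [mul_nonneg (by linarith : (0:ℤ) ≤ 2*(n:ℤ)) (by linarith : (0:ℤ) ≤ (p:ℤ) - j)]
      · nlinarith [mul_le_mul_of_nonneg_left (by linarith : (1:ℤ) ≤ (j:ℤ) - p)
          (by linarith : (0:ℤ) ≤ 2*(n:ℤ))]
    · rw [huval2 i hiq, huval2 j hjq] at heq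
      have : (i:ℤ) = (j:ℤ) := by linarith
      exact hij (by exact_mod_cast this)
  have hdown : ∀ k, k + 1 ≤ d₀ → u (k+1) < u k := by
    intro k hk
    rcases Nat.lt_or_ge (k+1) q with h | h
    · rw [huval1 (k+1) h, huval1 k (by omega)]
      have hc : ((k+1:ℕ):ℤ) = (k:ℤ)+1 := by push_cast; ring
      rw [hc]
      have he : 2*(n:ℤ)*((k:ℤ)+1) = 2*(n:ℤ)*(k:ℤ) + 2*(n:ℤ) := by ring
      rw [he]
      linarith
    · have hkq : k + 1 = q := by omega
      have hqp1 : q = p + 1 := by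
        by_contra hne
        rw [hd₀def, if_neg hne] at hk
        omega
      have hkp : k = p := by omega
      rw [hkq, hkp, huqv, hupv]
      linarith
  have hup : ∀ k, d₀ ≤ k → k + 1 < n → u k < u (k+1) := by
    intro k hk hkn
    rcases Nat.lt_or_ge k q with h | h
    · -- then k = q - 1 and q ≥ p + 2 (d₀ = q - 1 ≤ k < q)
      have hqp : q ≠ p + 1 := by
        intro hqp1
        rw [hd₀def, if_pos hqp1] at hk
        omega
      have hkq : k = q - 1 := by
        rw [hd₀def, if_neg hqp] at hk
        omega
      have hq2 : p + 2 ≤ q := by omega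
      have hk1 : k + 1 = q := by omega
      rw [hk1, huval1 k (by omega), huqv]
      have hck : (k:ℤ) = (q:ℤ) - 1 := by omega
      rw [hck]
      have hcpq : (p:ℤ) + 2 ≤ (q:ℤ) := by omega
      nlinarith [mul_le_mul_of_nonneg_left hcpq (by linarith : (0:ℤ) ≤ 2*(n:ℤ))]
    · rw [huval2 k h, huval2 (k+1) (by omega)]
      push_cast
      linarith
  have hAtop : ∀ m : ℕ, p < m → m ≤ q → u m < u p := by
    intro m h1 h2
    rcases Nat.lt_or_ge m q with h | h
    · rw [huval1 m h, hupv]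
      have : (p:ℤ) < (m:ℤ) := by exact_mod_cast h1
      nlinarith
    · have hmq : m = q := by omega
      rw [hmq, huqv, hupv]
      linarith
  have hBtop : ∀ m : ℕ, p < m → m < q → u m < u q := by
    intro m h1 h2
    rw [huval1 m h2, huqv]
    have : (p:ℤ) + 1 ≤ (m:ℤ) := by exact_mod_cast h1
    nlinarith
  refine ⟨fun x y : Fin n => u (y:ℕ) < u (x:ℕ), sd_PU u d₀ hd₀lt hinj hdown hup, ?_, ?_⟩
  · refine ⟨haO, ?_⟩
    intro c hc hca
    have h1 : p < (c:ℕ) := by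
      have ha1 := Fin.le_def.mp (hamin c hc)
      have ha2 : (c:ℕ) ≠ p := fun h => hca (Fin.ext h)
      omega
    exact hAtop _ h1 (Fin.le_def.mp (hbmax c hc))
  · refine ⟨⟨hbO, fun h => hab (Set.mem_singleton_iff.mp h).symm⟩, ?_⟩
    intro c hc hcb
    obtain ⟨hcO, hca⟩ := hc
    have h1 : p < (c:ℕ) := by
      have ha1 := Fin.le_def.mp (hamin c hcO)
      have ha2 : (c:ℕ) ≠ p := fun h => hca (Set.mem_singleton_iff.mpr (Fin.ext h))
      omega
    have h2 : (c:ℕ) < q := by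
      have hb1 := Fin.le_def.mp (hbmax c hcO)
      have hb2 : (c:ℕ) ≠ q := fun h => hcb (Fin.ext h)
      omega
    exact hBtop _ h1 h2

set_option maxHeartbeats 1000000 in
lemma caseB {n : ℕ} (hn : 3 ≤ n) {O' : Set (Fin n)} {a b : Fin n}
    (haO : a ∈ O') (hbO : b ∈ O') (hab : a ≠ b)
    (hamax : ∀ c ∈ O', c ≤ a) (hbmin : ∀ c ∈ O', b ≤ c) :
    ∃ P0 ∈ SDDomain n, top P0 O' a ∧ top P0 (O' \ {a}) b := by
  have hN0 : (0:ℤ) < (n:ℤ) := by exact_mod_cast (by omega : 0 < n)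
  set p := (b:ℕ) with hp
  set q := (a:ℕ) with hq
  have hpq : p < q := by
    have h1 := Fin.le_def.mp (hbmin a haO)
    have h2 : (a:ℕ) ≠ (b:ℕ) := fun h => hab (Fin.ext h)
    omega
  have hqn : q < n := a.isLt
  set u : ℕ → ℤ := fun k => if p < k then 2*(n:ℤ)*k else 2*(n:ℤ)*q - (n:ℤ) + ((p:ℤ) - k)
    with hu
  have huval1 : ∀ m : ℕ, p < m → u m = 2*(n:ℤ)*m := by
    intro m hm; simp [hu, hm]
  have huval2 : ∀ m : ℕ, m ≤ p → u m = 2*(n:ℤ)*q - (n:ℤ) + ((p:ℤ) - m) := by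
    intro m hm; simp [hu, Nat.not_lt.mpr hm]
  have hupv : u p = 2*(n:ℤ)*q - (n:ℤ) := by
    rw [huval2 p le_rfl]; ring
  have huqv : u q = 2*(n:ℤ)*q := huval1 q hpq
  set d₀ : ℕ := if q = p + 1 then p else p + 1 with hd₀def
  have hd₀q : d₀ ≤ p + 1 := by rw [hd₀def]; split <;> omega
  have hd₀lt : d₀ < n := by omega
  have hinj : ∀ i j : ℕ, i < n → j < n → i ≠ j → u i ≠ u j := by
    intro i j hi hj hij heq
    rcases Nat.lt_or_ge p i with hiq | hiq <;> rcases Nat.lt_or_ge p j with hjq | hjq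
    · rw [huval1 i hiq, huval1 j hjq] at heq
      have : (i:ℤ) = (j:ℤ) := mul_left_cancel₀ (by linarith : (2*(n:ℤ)) ≠ 0) heq
      exact hij (by exact_mod_cast this)
    · rw [huval1 i hiq, huval2 j hjq] at heq
      have ht1 : (0:ℤ) ≤ (p:ℤ) - j := by omega
      have ht2 : (p:ℤ) - j < (n:ℤ) := by omega
      rcases le_or_gt (i:ℤ) ((q:ℤ) - 1) with h | h
      · nlinarith [mul_le_mul_of_nonneg_left (by linarith : (1:ℤ) ≤ (q:ℤ) - i)
          (by linarith : (0:ℤ) ≤ 2*(n:ℤ))]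
      · nlinarith [mul_nonneg (by linarith : (0:ℤ) ≤ 2*(n:ℤ)) (by linarith : (0:ℤ) ≤ (i:ℤ) - q)]
    · rw [huval2 i hiq, huval1 j hjq] at heq
      have ht1 : (0:ℤ) ≤ (p:ℤ) - i := by omega
      have ht2 : (p:ℤ) - i < (n:ℤ) := by omega
      rcases le_or_gt (j:ℤ) ((q:ℤ) - 1) with h | h
      · nlinarith [mul_le_mul_of_nonneg_left (by linarith : (1:ℤ) ≤ (q:ℤ) - j)
          (by linarith : (0:ℤ) ≤ 2*(n:ℤ))]
      · nlinarith [mul_nonneg (by linarith : (0:ℤ) ≤ 2*(n:ℤ)) (by linarith : (0:ℤ) ≤ (j:ℤ) - q)]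
    · rw [huval2 i hiq, huval2 j hjq] at heq
      have : (i:ℤ) = (j:ℤ) := by linarith
      exact hij (by exact_mod_cast this)
  have hdown : ∀ k, k + 1 ≤ d₀ → u (k+1) < u k := by
    intro k hk
    rcases Nat.lt_or_ge k p with h | h
    · rw [huval2 (k+1) (by omega), huval2 k (by omega)]
      have hc : ((k+1:ℕ):ℤ) = (k:ℤ)+1 := by omega
      rw [hc]
      linarith
    · -- k ≥ p, k + 1 ≤ d₀ ≤ p + 1 so k = p, d₀ = p + 1, q ≠ p + 1
      have hkp : k = p := by omega
      have hqp : q ≠ p + 1 := by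
        intro hqp1
        rw [hd₀def, if_pos hqp1] at hk
        omega
      have hq2 : p + 2 ≤ q := by omega
      rw [hkp, huval1 (p+1) (by omega), hupv]
      have hc : ((p+1:ℕ):ℤ) = (p:ℤ)+1 := by omega
      rw [hc]
      have hcpq : (p:ℤ) + 2 ≤ (q:ℤ) := by omega
      nlinarith [mul_le_mul_of_nonneg_left hcpq (by linarith : (0:ℤ) ≤ 2*(n:ℤ))]
  have hup : ∀ k, d₀ ≤ k → k + 1 < n → u k < u (k+1) := by
    intro k hk hkn
    rcases Nat.lt_or_ge p k with h | h
    · rw [huval1 k h, huval1 (k+1) (by omega)]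
      have hc : ((k+1:ℕ):ℤ) = (k:ℤ)+1 := by omega
      rw [hc]
      have he : 2*(n:ℤ)*((k:ℤ)+1) = 2*(n:ℤ)*(k:ℤ) + 2*(n:ℤ) := by ring
      rw [he]
      linarith
    · -- k ≤ p and d₀ ≤ k: then d₀ = p (q = p+1) and k = p
      have hqp1 : q = p + 1 := by
        by_contra hne
        rw [hd₀def, if_neg hne] at hk
        omega
      have hkp : k = p := by
        rw [hd₀def, if_pos hqp1] at hk
        omega
      rw [hkp, hupv, huval1 (p+1) (by omega)]
      have hc : ((p+1:ℕ):ℤ) = (p:ℤ)+1 := by omega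
      rw [hc]
      have hcq : (q:ℤ) = (p:ℤ) + 1 := by omega
      rw [hcq]
      nlinarith
  have hAtop : ∀ m : ℕ, p ≤ m → m < q → u m < u q := by
    intro m h1 h2
    rcases Nat.lt_or_ge p m with h | h
    · rw [huval1 m h, huqv]
      have : (m:ℤ) < (q:ℤ) := by omega
      nlinarith
    · have hmp : m = p := by omega
      rw [hmp, hupv, huqv]
      linarith
  have hBtop : ∀ m : ℕ, p < m → m < q → u m < u p := by
    intro m h1 h2
    rw [huval1 m h1, hupv]
    have : (m:ℤ) + 1 ≤ (q:ℤ) := by omega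
    nlinarith
  refine ⟨fun x y : Fin n => u (y:ℕ) < u (x:ℕ), sd_PU u d₀ hd₀lt hinj hdown hup, ?_, ?_⟩
  · refine ⟨haO, ?_⟩
    intro c hc hca
    have h2 : (c:ℕ) < q := by
      have ha1 := Fin.le_def.mp (hamax c hc)
      have ha2 : (c:ℕ) ≠ q := fun h => hca (Fin.ext h)
      omega
    exact hAtop _ (Fin.le_def.mp (hbmin c hc)) h2
  · refine ⟨⟨hbO, fun h => hab (Set.mem_singleton_iff.mp h).symm⟩, ?_⟩
    intro c hc hcb
    obtain ⟨hcO, hca⟩ := hc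
    have h2 : (c:ℕ) < q := by
      have ha1 := Fin.le_def.mp (hamax c hcO)
      have ha2 : (c:ℕ) ≠ q := fun h => hca (Set.mem_singleton_iff.mpr (Fin.ext h))
      omega
    have h1 : p < (c:ℕ) := by
      have hb1 := Fin.le_def.mp (hbmin c hcO)
      have hb2 : (c:ℕ) ≠ p := fun h => hcb (Fin.ext h)
      omega
    exact hBtop _ h1 h2

theorem stmt7 {n : ℕ} (hn : 3 ≤ n) : topTwo (SDDomain n) := by
  intro O' hO'ne a b haO hbO hab ha hb
  obtain ⟨Pa, hPa, htopa⟩ := ha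
  obtain ⟨Pb, hPb, htopb⟩ := hb
  rcases top_min_or_max hn hPa htopa with hamin | hamax
  · rcases top_min_or_max hn hPb htopb with hbmin | hbmax
    · exact absurd (le_antisymm (hamin b hbO) (hbmin a haO)) hab
    · exact caseA hn haO hbO hab hamin hbmax
  · rcases top_min_or_max hn hPb htopb with hbmin | hbmax
    · exact caseB hn haO hbO hab hamax hbmin
    · exact absurd (le_antisymm (hbmax a haO) (hamax b hbO)) hab
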